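/- Let g be C² on [0,∞) with g(0)=0, g' > 0, g'' < 0 on (0,x*), g'' > 0 on (x*,∞) for some x* > 0, and g'(x) → ∞ as x → ∞. Then for every x̲ ∈ (0, x*) there exists a unique x̄ > x̲ satisfying the smooth-fit equation g'(x̄) = (g(x̄) - g(x̲))/(x̄ - x̲), and this x̄ satisfies x̄ > x*. Moreover if x̲ ≥ x* then no x̄ > x̲ satisfies this equation. -/

import Mathlib

open Set Filter

private lemma auxF (g : ℝ → ℝ) (hC2 : ContDiffOn ℝ 2 g (Set.Ici 0)) (a b : ℝ) :
    ∀ x : ℝ, 0 < x →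
      HasDerivAt (fun x => deriv g x * (x - a) - (g x - g b))
        (deriv (deriv g) x * (x - a)) x := by
  have h2 : ContDiffOn ℝ 2 g (Set.Ioi 0) := hC2.mono Set.Ioi_subset_Ici_self
  have hd1 : ContDiffOn ℝ 1 (deriv g) (Set.Ioi 0) :=
    h2.deriv_of_isOpen isOpen_Ioi (by norm_num)
  intro x hx
  have hg : DifferentiableAt ℝ g x :=
    (h2.differentiableOn (by norm_num)).differentiableAt (isOpen_Ioi.mem_nhds hx)
  have hg' : DifferentiableAt ℝ (deriv g) x :=
    (hd1.differentiableOn (by norm_num)).differentiableAt (isOpen_Ioi.mem_nhds hx)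
  have H := ((hg'.hasDerivAt.mul ((hasDerivAt_id x).sub_const a)).sub
    (hg.hasDerivAt.sub_const (g b)))
  convert H using 1
  · rfl
  · rfl
  · rfl
  · simp [id]

theorem stmt7 (g : ℝ → ℝ) (xstar : ℝ)
    (hC2 : ContDiffOn ℝ 2 g (Set.Ici 0))
    (h0 : g 0 = 0) (hd : ∀ x : ℝ, 0 ≤ x → 0 < deriv g x)
    (hxs : 0 < xstar)
    (hconc : ∀ x ∈ Set.Ioo 0 xstar, deriv (deriv g) x < 0)
    (hconv : ∀ x : ℝ, xstar < x → 0 < deriv (deriv g) x)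
    (hinf : Filter.Tendsto (deriv g) Filter.atTop Filter.atTop) :
    (∀ xl ∈ Set.Ioo 0 xstar,
      ∃ xb : ℝ, xl < xb ∧ xstar < xb ∧
        deriv g xb = (g xb - g xl) / (xb - xl) ∧
        ∀ y : ℝ, xl < y → deriv g y = (g y - g xl) / (y - xl) → y = xb) ∧
    (∀ xl : ℝ, xstar ≤ xl →
      ¬ ∃ xb : ℝ, xl < xb ∧ deriv g xb = (g xb - g xl) / (xb - xl)) := by
  constructor
  · -- existence and uniqueness for xl ∈ (0, xstar)
    rintro xl ⟨hxl0, hxls⟩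
    set F : ℝ → ℝ := fun x => deriv g x * (x - xl) - (g x - g xl) with hF
    have hFd : ∀ x : ℝ, 0 < x → HasDerivAt F (deriv (deriv g) x * (x - xl)) x :=
      auxF g hC2 xl xl
    have hFxl : F xl = 0 := by simp [hF]
    have hderF : ∀ x : ℝ, 0 < x → deriv F x = deriv (deriv g) x * (x - xl) :=
      fun x hx => (hFd x hx).deriv
    have hFcont : ContinuousOn F (Set.Ioi 0) := fun x hx =>
      (hFd x hx).differentiableAt.continuousAt.continuousWithinAt
    -- F strictly decreasing on [xl, xstar]
    have hanti : StrictAntiOn F (Set.Icc xl xstar) := by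
      apply strictAntiOn_of_deriv_neg (convex_Icc _ _)
        (hFcont.mono (fun x hx => lt_of_lt_of_le hxl0 hx.1))
      intro x hx
      rw [interior_Icc] at hx
      rw [hderF x (lt_trans hxl0 hx.1)]
      exact mul_neg_of_neg_of_pos (hconc x ⟨lt_trans hxl0 hx.1, hx.2⟩)
        (by linarith [hx.1])
    -- F strictly increasing on [xstar, ∞)
    have hmono : StrictMonoOn F (Set.Ici xstar) := by
      apply strictMonoOn_of_deriv_pos (convex_Ici _)
        (hFcont.mono (fun x hx => lt_of_lt_of_le hxs hx))
      intro x hx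
      rw [interior_Ici] at hx
      have hx' : xstar < x := hx
      rw [hderF x (lt_trans hxs hx')]
      exact mul_pos (hconv x hx') (by linarith)
    have hFstar : F xstar < 0 := by
      have := hanti ⟨le_refl xl, le_of_lt hxls⟩ ⟨le_of_lt hxls, le_refl xstar⟩ hxls
      rw [hFxl] at this; exact this
    have hFneg : ∀ y : ℝ, xl < y → y ≤ xstar → F y < 0 := by
      intro y hy1 hy2
      have := hanti ⟨le_refl xl, le_of_lt hxls⟩ ⟨le_of_lt hy1, hy2⟩ hy1
      rw [hFxl] at this; exact this
    -- ∃ M > xstar with F M > 0, via the lower bound H xstar + c * deriv g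
    set c : ℝ := xstar - xl with hc
    have hcpos : 0 < c := by simp only [hc]; linarith
    set H : ℝ → ℝ := fun x => deriv g x * (x - xstar) - (g x - g xl) with hH
    have hHd : ∀ x : ℝ, 0 < x → HasDerivAt H (deriv (deriv g) x * (x - xstar)) x :=
      auxF g hC2 xstar xl
    have hHF : ∀ x : ℝ, H x = F x - c * deriv g x := by
      intro x; simp only [hH, hF, hc]; ring
    have hHmono : MonotoneOn H (Set.Ici xstar) := by
      apply monotoneOn_of_deriv_nonneg (convex_Ici _)
        (fun x hx => (hHd x (lt_of_lt_of_le hxs hx)).differentiableAt.continuousAt.continuousWithinAt)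
      · intro x hx
        rw [interior_Ici] at hx
        exact (hHd x (lt_trans hxs hx)).differentiableAt.differentiableWithinAt
      · intro x hx
        rw [interior_Ici] at hx
        have hx' : xstar < x := hx
        rw [(hHd x (lt_trans hxs hx')).deriv]
        exact mul_nonneg (le_of_lt (hconv x hx')) (by linarith)
    have hlow : ∀ x : ℝ, xstar ≤ x → H xstar + c * deriv g x ≤ F x := by
      intro x hx
      have := hHmono (self_mem_Ici) hx hx
      rw [hHF x] at this
      linarith
    have htend : Filter.Tendsto (fun x => H xstar + c * deriv g x)
        Filter.atTop Filter.atTop :=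
      Filter.tendsto_atTop_add_const_left _ _ (hinf.const_mul_atTop hcpos)
    obtain ⟨M, hM1, hM2⟩ : ∃ M : ℝ, xstar < M ∧ 0 < F M := by
      have h1 : ∀ᶠ x in Filter.atTop, 0 < H xstar + c * deriv g x :=
        htend.eventually_gt_atTop 0
      have h2 : ∀ᶠ x in Filter.atTop, xstar < x := eventually_gt_atTop xstar
      obtain ⟨M, hMa, hMb⟩ := (h1.and h2).exists
      exact ⟨M, hMb, lt_of_lt_of_le hMa (hlow M (le_of_lt hMb))⟩
    -- IVT to find the zero
    obtain ⟨xb, hxbmem, hxbz⟩ : ∃ xb ∈ Set.Icc xstar M, F xb = 0 := by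
      have hsub : Set.Icc xstar M ⊆ Set.Ioi 0 := fun x hx => lt_of_lt_of_le hxs hx.1
      have := intermediate_value_Icc (le_of_lt hM1) (hFcont.mono hsub)
      obtain ⟨xb, hxb, hz⟩ := this ⟨le_of_lt hFstar, le_of_lt hM2⟩
      exact ⟨xb, hxb, hz⟩
    have hxbstar : xstar < xb := by
      rcases lt_or_eq_of_le hxbmem.1 with h | h
      · exact h
      · exfalso; rw [← h] at hxbz; linarith
    have hxbl : xl < xb := lt_trans hxls hxbstar
    have hxbne : xb - xl ≠ 0 := by linarith
    refine ⟨xb, hxbl, hxbstar, ?_, ?_⟩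
    · rw [eq_div_iff hxbne]
      have : F xb = 0 := hxbz
      simp only [hF] at this; linarith
    · intro y hy heq
      have hyz : F y = 0 := by
        have hyne : y - xl ≠ 0 := by linarith
        rw [eq_div_iff hyne] at heq
        simp only [hF]; linarith
      have hystar : xstar < y := by
        by_contra h
        push_neg at h
        exact absurd hyz (ne_of_lt (hFneg y hy h))
      exact hmono.injOn (le_of_lt hystar) (le_of_lt hxbstar) (by rw [hyz, hxbz])
  · -- no solution for xl ≥ xstar
    intro xl hxl ⟨xb, hxb, heq⟩
    have hxl0 : 0 < xl := lt_of_lt_of_le hxs hxl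
    set F : ℝ → ℝ := fun x => deriv g x * (x - xl) - (g x - g xl) with hF
    have hFd : ∀ x : ℝ, 0 < x → HasDerivAt F (deriv (deriv g) x * (x - xl)) x :=
      auxF g hC2 xl xl
    have hFxl : F xl = 0 := by simp [hF]
    have hmono : StrictMonoOn F (Set.Ici xl) := by
      apply strictMonoOn_of_deriv_pos (convex_Ici _)
        (fun x hx => (hFd x (lt_of_lt_of_le hxl0 hx)).differentiableAt.continuousAt.continuousWithinAt)
      intro x hx
      rw [interior_Ici] at hx
      have hx' : xl < x := hx
      rw [(hFd x (lt_trans hxl0 hx')).deriv]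
      exact mul_pos (hconv x (lt_of_le_of_lt hxl hx')) (by linarith)
    have hpos : 0 < F xb := by
      have := hmono self_mem_Ici (le_of_lt hxb) hxb
      rw [hFxl] at this; exact this
    have hxbne : xb - xl ≠ 0 := by linarith
    rw [eq_div_iff hxbne] at heq
    simp only [hF] at hpos
    linarith
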